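/- The sums defining Φ∗Ψ and Φ∗f are finite and independent of the choice of coset representatives; (H(G,K,V), ∗) is an associative unital C-algebra; for Φ ∈ H(G,K,V) and f ∈ ind_K^G V the function Φ∗f again lies in ind_K^G V; and the map Φ ↦ (f ↦ Φ∗f) is an isomorphism of C-algebras from H(G,K,V) onto End_{C[G]}(ind_K^G V), where endomorphisms are multiplied by (b·b')(f) = b(b'(f)). -/

import Mathlib

open scoped Classical

noncomputable section
namespace Paper

variable {C : Type} [Field C] {G : Type} [Group G]

/-- The compactly induced module `ind_K^G V`, as a `C`-submodule of `G → V`. -/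
def cInd (K : Subgroup G) {V : Type} [AddCommGroup V] [Module C V]
    (ρ : Representation C ↥K V) : Submodule C (G → V) where
  carrier := {f | (∀ (k : ↥K) (x : G), f (↑k * x) = ρ k (f x)) ∧
    ∃ S : Finset G, ∀ x : G, f x ≠ 0 → ∃ s ∈ S, ∃ k ∈ K, x = k * s}
  add_mem' := by
    rintro a b ⟨ha1, Sa, ha2⟩ ⟨hb1, Sb, hb2⟩
    refine ⟨fun k x => by simp [ha1 k x, hb1 k x], Sa ∪ Sb, fun x hx => ?_⟩
    by_cases h : a x ≠ 0
    · obtain ⟨s, hs, k, hk, h'⟩ := ha2 x h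
      exact ⟨s, Finset.mem_union_left _ hs, k, hk, h'⟩
    · push_neg at h
      have hbx : b x ≠ 0 := by
        intro hb0; apply hx; simp only [Pi.add_apply, h, hb0, add_zero]
      obtain ⟨s, hs, k, hk, h'⟩ := hb2 x hbx
      exact ⟨s, Finset.mem_union_right _ hs, k, hk, h'⟩
  zero_mem' := ⟨fun k x => by simp, ∅, fun x hx => absurd rfl hx⟩
  smul_mem' := by
    rintro c a ⟨ha1, Sa, ha2⟩
    refine ⟨fun k x => by simp [ha1 k x], Sa, fun x hx => ?_⟩
    refine ha2 x (fun h0 => hx ?_)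
    simp only [Pi.smul_apply, h0, smul_zero]

/-- Hecke algebra H(G,K,V) as a submodule of `G → End V`. -/
def Hecke (K : Subgroup G) {V : Type} [AddCommGroup V] [Module C V]
    (ρ : Representation C ↥K V) : Submodule C (G → Module.End C V) where
  carrier := {Φ | (∀ (k k' : ↥K) (g : G), Φ (↑k * g * ↑k') = ρ k * Φ g * ρ k') ∧
    ∃ S : Finset G, ∀ g : G, Φ g ≠ 0 → ∃ s ∈ S, ∃ k ∈ K, ∃ k' ∈ K, g = k * s * k'}
  add_mem' := by
    rintro a b ⟨ha1, Sa, ha2⟩ ⟨hb1, Sb, hb2⟩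
    refine ⟨fun k k' g => by simp [ha1 k k' g, hb1 k k' g, mul_add, add_mul],
      Sa ∪ Sb, fun g hg => ?_⟩
    by_cases h : a g ≠ 0
    · obtain ⟨s, hs, hrest⟩ := ha2 g h
      exact ⟨s, Finset.mem_union_left _ hs, hrest⟩
    · push_neg at h
      have hbg : b g ≠ 0 := by
        intro hb0; apply hg; simp only [Pi.add_apply, h, hb0, add_zero]
      obtain ⟨s, hs, hrest⟩ := hb2 g hbg
      exact ⟨s, Finset.mem_union_right _ hs, hrest⟩
  zero_mem' := ⟨fun k k' g => by simp, ∅, fun g hg => absurd rfl hg⟩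
  smul_mem' := by
    rintro c a ⟨ha1, Sa, ha2⟩
    refine ⟨fun k k' g => by
      simp only [Pi.smul_apply, ha1 k k' g, mul_smul_comm, smul_mul_assoc],
      Sa, fun g hg => ?_⟩
    refine ha2 g (fun h0 => hg ?_)
    simp only [Pi.smul_apply, h0, smul_zero]

/-- Convolution product on functions `G → End V`, with respect to `K`. -/
def conv (K : Subgroup G) {V : Type} [AddCommGroup V] [Module C V]
    (Φ Ψ : G → Module.End C V) : G → Module.End C V :=
  fun g => ∑ᶠ q : G ⧸ K, Φ (Quotient.out q) * Ψ ((Quotient.out q)⁻¹ * g)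

/-- Convolution action of functions `G → End V` on functions `G → V`. -/
def convAct (K : Subgroup G) {V : Type} [AddCommGroup V] [Module C V]
    (Φ : G → Module.End C V) (f : G → V) : G → V :=
  fun g => ∑ᶠ q : G ⧸ K, Φ (Quotient.out q) (f ((Quotient.out q)⁻¹ * g))

/-- The unit of the Hecke algebra. -/
def heckeUnit (K : Subgroup G) {V : Type} [AddCommGroup V] [Module C V]
    (ρ : Representation C ↥K V) : G → Module.End C V :=
  fun g => if h : g ∈ K then (ρ ⟨g, h⟩ : Module.End C V) else 0



section Helpers
variable {V : Type} [AddCommGroup V] [Module C V] {K : Subgroup G} {ρ : Representation C ↥K V}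

lemma rep_diff {x y : G} (h : (x : G ⧸ K) = (y : G ⧸ K)) : ∃ k : K, y = x * ↑k :=
  ⟨⟨x⁻¹ * y, QuotientGroup.eq.mp h⟩, (mul_inv_cancel_left x y).symm⟩

lemma hecke1 {Φ : G → Module.End C V} (hΦ : Φ ∈ Hecke K ρ) (k : ↥K) (g : G) :
    Φ (↑k * g) = ρ k * Φ g := by
  have := hΦ.1 k 1 g
  simpa using this

lemma hecke2 {Φ : G → Module.End C V} (hΦ : Φ ∈ Hecke K ρ) (g : G) (k : ↥K) :
    Φ (g * ↑k) = Φ g * ρ k := by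
  have := hΦ.1 1 k g
  simpa using this

lemma conv_term_K {Φ Ψ : G → Module.End C V} (hΦ : Φ ∈ Hecke K ρ) (hΨ : Ψ ∈ Hecke K ρ)
    (g : G) : ∀ (h : G) (k : ↥K), Φ (h * ↑k) * Ψ ((h * ↑k)⁻¹ * g) = Φ h * Ψ (h⁻¹ * g) := by
  intro h k
  have e1 : (h * ↑k)⁻¹ * g = ↑k⁻¹ * (h⁻¹ * g) := by
    simp [mul_inv_rev, mul_assoc]
  rw [e1, hecke2 hΦ, hecke1 hΨ, mul_assoc, ← mul_assoc (ρ k), ← map_mul, mul_inv_cancel,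
    map_one, one_mul]

lemma act_term_K {Φ : G → Module.End C V} {f : G → V} (hΦ : Φ ∈ Hecke K ρ) (hf : f ∈ cInd K ρ)
    (g : G) : ∀ (h : G) (k : ↥K), Φ (h * ↑k) (f ((h * ↑k)⁻¹ * g)) = Φ h (f (h⁻¹ * g)) := by
  intro h k
  have e1 : (h * ↑k)⁻¹ * g = ↑k⁻¹ * (h⁻¹ * g) := by
    simp [mul_inv_rev, mul_assoc]
  rw [e1, hecke2 hΦ, hf.1 k⁻¹ (h⁻¹ * g), ← Module.End.mul_apply (Φ h * ρ k), mul_assoc,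
    ← map_mul, mul_inv_cancel, map_one, mul_one]

lemma finsum_rep {M : Type} [AddCommMonoid M] (F : G → M)
    (hF : ∀ (h : G) (k : ↥K), F (h * ↑k) = F h)
    (rep : G ⧸ K → G) (hrep : ∀ q : G ⧸ K, (QuotientGroup.mk (rep q) : G ⧸ K) = q) :
    ∑ᶠ q : G ⧸ K, F (rep q) = ∑ᶠ q : G ⧸ K, F (Quotient.out q) := by
  refine finsum_congr fun q => ?_
  have h : ((Quotient.out q : G) : G ⧸ K) = ((rep q : G) : G ⧸ K) := by
    rw [hrep, QuotientGroup.out_eq']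
  obtain ⟨k, hk⟩ := rep_diff h
  rw [hk, hF]

lemma finsum_translate {M : Type} [AddCommMonoid M] (F : G → M)
    (hF : ∀ (h : G) (k : ↥K), F (h * ↑k) = F h) (a : G) :
    ∑ᶠ q : G ⧸ K, F (a * Quotient.out q) = ∑ᶠ q : G ⧸ K, F (Quotient.out q) := by
  have key : ∑ᶠ q : G ⧸ K, F (a * Quotient.out (((a⁻¹ • q : G ⧸ K)))) = ∑ᶠ q : G ⧸ K, F (Quotient.out q) := by
    refine finsum_rep F hF (fun q => a * Quotient.out (((a⁻¹ • q : G ⧸ K)))) fun q => ?_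
    have : (QuotientGroup.mk (a * Quotient.out (((a⁻¹ • q : G ⧸ K)))) : G ⧸ K)
        = a • (QuotientGroup.mk (Quotient.out (((a⁻¹ • q : G ⧸ K))))) := rfl
    rw [this, QuotientGroup.out_eq', smul_smul, mul_inv_cancel, one_smul]
  calc ∑ᶠ q : G ⧸ K, F (a * Quotient.out q)
      = ∑ᶠ q : G ⧸ K, F (a * Quotient.out (a⁻¹ • (MulAction.toPerm a q))) := by
        refine finsum_congr fun q => ?_
        congr 2
        simp [MulAction.toPerm, smul_smul]
    _ = ∑ᶠ q : G ⧸ K, F (a * Quotient.out (((a⁻¹ • q : G ⧸ K)))) :=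
        finsum_comp_equiv (MulAction.toPerm a) (f := fun q => F (a * Quotient.out (((a⁻¹ • q : G ⧸ K)))))
    _ = ∑ᶠ q : G ⧸ K, F (Quotient.out q) := key

lemma supp_fin {M : Type} [Zero M] (F : G → M) (S : Finset G)
    (hS : ∀ h : G, F h ≠ 0 → ∃ s ∈ S, ∃ k ∈ K, h = s * k) :
    {q : G ⧸ K | F (Quotient.out q) ≠ 0}.Finite := by
  refine Set.Finite.subset (S.finite_toSet.image (QuotientGroup.mk : G → G ⧸ K)) ?_
  rintro q hq
  obtain ⟨s, hs, k, hk, he⟩ := hS _ hq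
  refine ⟨s, hs, ?_⟩
  have : ((s : G) : G ⧸ K) = ((Quotient.out q : G) : G ⧸ K) :=
    QuotientGroup.eq.mpr (by rw [he]; simpa using hk)
  rw [this, QuotientGroup.out_eq']


lemma finsum_swap {α β : Type} {M : Type} [AddCommMonoid M] (f : α → β → M)
    (A : Finset α) (B : Finset β) (h : ∀ a b, f a b ≠ 0 → a ∈ A ∧ b ∈ B) :
    ∑ᶠ a : α, ∑ᶠ b : β, f a b = ∑ᶠ b : β, ∑ᶠ a : α, f a b := by
  have hA : Function.support (fun a => ∑ᶠ b : β, f a b) ⊆ ↑A := by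
    intro a ha
    by_contra hna
    exact ha (finsum_eq_zero_of_forall_eq_zero fun b => by
      by_contra hb; exact hna (h a b hb).1)
  have hB : Function.support (fun b => ∑ᶠ a : α, f a b) ⊆ ↑B := by
    intro b hb
    by_contra hnb
    exact hb (finsum_eq_zero_of_forall_eq_zero fun a => by
      by_contra ha; exact hnb (h a b ha).2)
  rw [finsum_eq_finset_sum_of_support_subset _ hA, finsum_eq_finset_sum_of_support_subset _ hB]
  have e1 : ∀ a, ∑ᶠ b : β, f a b = ∑ b ∈ B, f a b := fun a =>
    finsum_eq_finset_sum_of_support_subset _ (fun b hb => (h a b hb).2)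
  have e2 : ∀ b, ∑ᶠ a : α, f a b = ∑ a ∈ A, f a b := fun b =>
    finsum_eq_finset_sum_of_support_subset _ (fun a ha => (h a b ha).1)
  simp only [e1, e2]
  exact Finset.sum_comm

variable (hA1 : ∀ g : G, ∃ S : Finset G, ∀ x : G,
      (∃ k ∈ K, ∃ k' ∈ K, x = k * g * k') → ∃ s ∈ S, ∃ k ∈ K, x = k * s)

include hA1 in
lemma leftA1 (g : G) : ∃ S : Finset G, ∀ x : G,
    (∃ k ∈ K, ∃ k' ∈ K, x = k * g * k') → ∃ s ∈ S, ∃ k ∈ K, x = s * k := by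
  obtain ⟨S, hS⟩ := hA1 g⁻¹
  refine ⟨S.image (·⁻¹), ?_⟩
  rintro x ⟨k, hk, k', hk', rfl⟩
  obtain ⟨s, hs, k₀, hk₀, he⟩ := hS (k * g * k')⁻¹
    ⟨k'⁻¹, inv_mem hk', k⁻¹, inv_mem hk, by group⟩
  refine ⟨s⁻¹, Finset.mem_image_of_mem _ hs, k₀⁻¹, inv_mem hk₀, ?_⟩
  rw [← inv_inv (k * g * k'), he, mul_inv_rev]

include hA1 in
lemma heckeSuppLeft {Φ : G → Module.End C V} (hΦ : Φ ∈ Hecke K ρ) :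
    ∃ S : Finset G, ∀ h : G, Φ h ≠ 0 → ∃ s ∈ S, ∃ k ∈ K, h = s * k := by
  obtain ⟨S₀, hS₀⟩ := hΦ.2
  choose T hT using fun s => leftA1 (K := K) hA1 s
  refine ⟨S₀.biUnion T, fun h hh => ?_⟩
  obtain ⟨s, hs, k, hk, k', hk', he⟩ := hS₀ h hh
  obtain ⟨t, ht, k₀, hk₀, he'⟩ := hT s h ⟨k, hk, k', hk', he⟩
  exact ⟨t, Finset.mem_biUnion.mpr ⟨s, hs, ht⟩, k₀, hk₀, he'⟩

include hA1 in
lemma conv_fin {Φ : G → Module.End C V} (hΦ : Φ ∈ Hecke K ρ) (Ψ : G → Module.End C V) (g : G) :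
    {q : G ⧸ K | Φ (Quotient.out q) * Ψ ((Quotient.out q)⁻¹ * g) ≠ 0}.Finite := by
  obtain ⟨S, hS⟩ := heckeSuppLeft hA1 hΦ
  exact supp_fin (fun h => Φ h * Ψ (h⁻¹ * g)) S fun h hh => hS h (fun h0 => hh (by rw [h0, zero_mul]))

include hA1 in
lemma act_fin {Φ : G → Module.End C V} (hΦ : Φ ∈ Hecke K ρ) (f : G → V) (g : G) :
    {q : G ⧸ K | Φ (Quotient.out q) (f ((Quotient.out q)⁻¹ * g)) ≠ 0}.Finite := by
  obtain ⟨S, hS⟩ := heckeSuppLeft hA1 hΦ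
  exact supp_fin (fun h => Φ h (f (h⁻¹ * g))) S fun h hh => hS h (fun h0 => hh (by rw [h0]; rfl))


include hA1 in
lemma convMem {Φ Ψ : G → Module.End C V} (hΦ : Φ ∈ Hecke K ρ) (hΨ : Ψ ∈ Hecke K ρ) :
    conv K Φ Ψ ∈ Hecke K ρ := by
  constructor
  · intro k k' g
    set F : G → Module.End C V := fun x => Φ x * Ψ (x⁻¹ * g) with hFdef
    have hFK : ∀ (h : G) (k₀ : ↥K), F (h * ↑k₀) = F h := conv_term_K hΦ hΨ g
    have key : ∀ q : G ⧸ K, Φ (Quotient.out q) * Ψ ((Quotient.out q)⁻¹ * (↑k * g * ↑k'))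
        = ρ k * F (↑k⁻¹ * Quotient.out q) * ρ k' := by
      intro q
      set h := Quotient.out q with hh
      have eΦ : ρ k * Φ (↑k⁻¹ * h) = Φ h := by
        rw [← hecke1 hΦ k (↑k⁻¹ * h)]
        congr 1
        simp
      have eΨ : Ψ ((↑k⁻¹ * h : G)⁻¹ * g) * ρ k' = Ψ (h⁻¹ * (↑k * g * ↑k')) := by
        rw [← hecke2 hΨ]
        congr 1
        simp [mul_inv_rev, mul_assoc]
      calc Φ h * Ψ (h⁻¹ * (↑k * g * ↑k'))
          = (ρ k * Φ (↑k⁻¹ * h)) * (Ψ ((↑k⁻¹ * h : G)⁻¹ * g) * ρ k') := by rw [eΦ, eΨ]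
        _ = ρ k * F (↑k⁻¹ * h) * ρ k' := by simp only [hFdef, mul_assoc]
    have hfin : (Function.support fun q : G ⧸ K => F (↑k⁻¹ * Quotient.out q)).Finite := by
      obtain ⟨S, hS⟩ := heckeSuppLeft hA1 hΦ
      refine supp_fin (fun h => F (↑k⁻¹ * h)) (S.image (fun s => (↑k : G) * s)) fun h hh => ?_
      have hne : Φ (↑k⁻¹ * h) ≠ 0 := fun h0 => hh (by simp only [hFdef]; rw [h0, zero_mul])
      obtain ⟨s, hs, k₀, hk₀, he⟩ := hS _ hne
      refine ⟨(↑k : G) * s, Finset.mem_image_of_mem _ hs, k₀, hk₀, ?_⟩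
      have : h = ↑k * (↑k⁻¹ * h) := by simp
      rw [this, he, mul_assoc]
    have hmap : ρ k * (∑ᶠ q : G ⧸ K, F (↑k⁻¹ * Quotient.out q)) * ρ k'
        = ∑ᶠ q : G ⧸ K, ρ k * F (↑k⁻¹ * Quotient.out q) * ρ k' :=
      AddMonoidHom.map_finsum
        (AddMonoidHom.mk' (fun x : Module.End C V => ρ k * x * ρ k')
          (fun a b => by simp [mul_add, add_mul])) hfin
    have e1 : conv K Φ Ψ (↑k * g * ↑k') = ∑ᶠ q : G ⧸ K, ρ k * F (↑k⁻¹ * Quotient.out q) * ρ k' :=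
      finsum_congr key
    rw [e1, ← hmap, finsum_translate F hFK (↑k⁻¹ : G)]
    rfl
  · obtain ⟨SΦ, hSΦ⟩ := hΦ.2
    obtain ⟨SΨL, hSΨL⟩ := heckeSuppLeft hA1 hΨ
    choose A hA using hA1
    refine ⟨((SΦ.biUnion A) ×ˢ SΨL).image (fun p => p.1 * p.2), fun g hg => ?_⟩
    have hex : ∃ q : G ⧸ K, Φ (Quotient.out q) * Ψ ((Quotient.out q)⁻¹ * g) ≠ 0 := by
      by_contra hno
      push_neg at hno
      exact hg (finsum_eq_zero_of_forall_eq_zero hno)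
    obtain ⟨q, hq⟩ := hex
    have hΦne : Φ (Quotient.out q) ≠ 0 := fun h0 => hq (by rw [h0, zero_mul])
    have hΨne : Ψ ((Quotient.out q)⁻¹ * g) ≠ 0 := fun h0 => hq (by rw [h0, mul_zero])
    obtain ⟨s, hs, k, hk, k', hk', he⟩ := hSΦ _ hΦne
    obtain ⟨a, ha, k₂, hk₂, he₂⟩ := hA s (Quotient.out q) ⟨k, hk, k', hk', he⟩
    obtain ⟨b, hb, k₃, hk₃, he₃⟩ := hSΨL _ hΨne
    refine ⟨a * b, Finset.mem_image.mpr ⟨(a, b),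
      Finset.mem_product.mpr ⟨Finset.mem_biUnion.mpr ⟨s, hs, ha⟩, hb⟩, rfl⟩,
      k₂, hk₂, k₃, hk₃, ?_⟩
    have e : g = (k₂ * a) * (b * k₃) := by rw [← he₂, ← he₃]; simp
    rw [e]
    simp [mul_assoc]

include hA1 in
lemma actMem {Φ : G → Module.End C V} {f : G → V} (hΦ : Φ ∈ Hecke K ρ) (hf : f ∈ cInd K ρ) :
    convAct K Φ f ∈ cInd K ρ := by
  constructor
  · intro k x
    set F : G → V := fun y => Φ y (f (y⁻¹ * x)) with hFdef
    have hFK : ∀ (h : G) (k₀ : ↥K), F (h * ↑k₀) = F h := act_term_K hΦ hf x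
    have key : ∀ q : G ⧸ K, Φ (Quotient.out q) (f ((Quotient.out q)⁻¹ * (↑k * x)))
        = ρ k (F (↑k⁻¹ * Quotient.out q)) := by
      intro q
      set h := Quotient.out q with hh
      have eΦ : ρ k * Φ (↑k⁻¹ * h) = Φ h := by
        rw [← hecke1 hΦ k (↑k⁻¹ * h)]
        congr 1
        simp
      have earg : ((↑k⁻¹ * h : G)⁻¹ * x) = h⁻¹ * (↑k * x) := by
        simp [mul_inv_rev, mul_assoc]
      simp only [hFdef, earg]
      rw [← Module.End.mul_apply, eΦ]
    have hfin : (Function.support fun q : G ⧸ K => F (↑k⁻¹ * Quotient.out q)).Finite := by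
      obtain ⟨S, hS⟩ := heckeSuppLeft hA1 hΦ
      refine supp_fin (fun h => F (↑k⁻¹ * h)) (S.image (fun s => (↑k : G) * s)) fun h hh => ?_
      have hne : Φ (↑k⁻¹ * h) ≠ 0 := fun h0 => hh (by simp only [hFdef]; rw [h0]; rfl)
      obtain ⟨s, hs, k₀, hk₀, he⟩ := hS _ hne
      refine ⟨(↑k : G) * s, Finset.mem_image_of_mem _ hs, k₀, hk₀, ?_⟩
      have : h = ↑k * (↑k⁻¹ * h) := by simp
      rw [this, he, mul_assoc]
    have hmap : ρ k (∑ᶠ q : G ⧸ K, F (↑k⁻¹ * Quotient.out q))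
        = ∑ᶠ q : G ⧸ K, ρ k (F (↑k⁻¹ * Quotient.out q)) :=
      AddMonoidHom.map_finsum ((ρ k : V →ₗ[C] V).toAddMonoidHom) hfin
    have e1 : convAct K Φ f (↑k * x) = ∑ᶠ q : G ⧸ K, ρ k (F (↑k⁻¹ * Quotient.out q)) :=
      finsum_congr key
    rw [e1, ← hmap, finsum_translate F hFK (↑k⁻¹ : G)]
    rfl
  · obtain ⟨SΦ, hSΦ⟩ := hΦ.2
    obtain ⟨Sf, hSf⟩ := hf.2
    choose A hA using hA1
    refine ⟨((SΦ.biUnion A) ×ˢ Sf).image (fun p => p.1 * p.2), fun g hg => ?_⟩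
    have hex : ∃ q : G ⧸ K, Φ (Quotient.out q) (f ((Quotient.out q)⁻¹ * g)) ≠ 0 := by
      by_contra hno
      push_neg at hno
      exact hg (finsum_eq_zero_of_forall_eq_zero hno)
    obtain ⟨q, hq⟩ := hex
    have hΦne : Φ (Quotient.out q) ≠ 0 := fun h0 => hq (by rw [h0]; rfl)
    have hfne : f ((Quotient.out q)⁻¹ * g) ≠ 0 := fun h0 => hq (by rw [h0, map_zero])
    obtain ⟨s, hs, k, hk, k', hk', he⟩ := hSΦ _ hΦne
    obtain ⟨t, ht, k₁, hk₁, he₁⟩ := hSf _ hfne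
    obtain ⟨a, ha, k₄, hk₄, he₄⟩ := hA s (Quotient.out q * k₁)
      ⟨k, hk, k' * k₁, mul_mem hk' hk₁, by rw [he]; simp [mul_assoc]⟩
    refine ⟨a * t, Finset.mem_image.mpr ⟨(a, t),
      Finset.mem_product.mpr ⟨Finset.mem_biUnion.mpr ⟨s, hs, ha⟩, ht⟩, rfl⟩, k₄, hk₄, ?_⟩
    have e : g = (k₄ * a) * t := by rw [← he₄, mul_assoc, ← he₁]; simp
    rw [e]
    simp [mul_assoc]


lemma out_mem_iff_one (q : G ⧸ K) :
    Quotient.out q ∈ K ↔ q = QuotientGroup.mk 1 := by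
  constructor
  · intro h
    have : ((Quotient.out q : G) : G ⧸ K) = ((1 : G) : G ⧸ K) :=
      QuotientGroup.eq.mpr (by simpa using inv_mem h)
    rw [QuotientGroup.out_eq'] at this
    exact this
  · intro h
    have : ((Quotient.out q : G) : G ⧸ K) = ((1 : G) : G ⧸ K) := by
      rw [QuotientGroup.out_eq', h]
    have h2 : (Quotient.out q)⁻¹ * 1 ∈ K := QuotientGroup.eq.mp this
    simpa using inv_mem h2

lemma out_mk_k (g : G) : (Quotient.out (QuotientGroup.mk g : G ⧸ K))⁻¹ * g ∈ K := by
  have : ((Quotient.out (QuotientGroup.mk g : G ⧸ K) : G) : G ⧸ K) = ((g : G) : G ⧸ K) :=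
    QuotientGroup.out_eq' _
  exact QuotientGroup.eq.mp this

lemma unitMem : heckeUnit K ρ ∈ Hecke K ρ := by
  constructor
  · intro k k' g
    by_cases hg : g ∈ K
    · have h1 : (↑k * g * ↑k' : G) ∈ K := mul_mem (mul_mem k.2 hg) k'.2
      show (if h : (↑k * g * ↑k' : G) ∈ K then (ρ ⟨↑k * g * ↑k', h⟩ : Module.End C V) else 0)
        = ρ k * (if h : g ∈ K then (ρ ⟨g, h⟩ : Module.End C V) else 0) * ρ k'
      rw [dif_pos h1, dif_pos hg]
      have : (⟨↑k * g * ↑k', h1⟩ : ↥K) = k * ⟨g, hg⟩ * k' := by ext; rfl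
      rw [this, map_mul, map_mul]
    · have h1 : (↑k * g * ↑k' : G) ∉ K := by
        intro hmem
        apply hg
        have h2 := mul_mem (mul_mem (inv_mem k.2) hmem) (inv_mem k'.2)
        have e : (↑k)⁻¹ * (↑k * g * ↑k') * (↑k')⁻¹ = g := by group
        rwa [e] at h2
      show (if h : (↑k * g * ↑k' : G) ∈ K then (ρ ⟨↑k * g * ↑k', h⟩ : Module.End C V) else 0)
        = ρ k * (if h : g ∈ K then (ρ ⟨g, h⟩ : Module.End C V) else 0) * ρ k'
      rw [dif_neg h1, dif_neg hg, mul_zero, zero_mul]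
  · refine ⟨{1}, fun g hg => ?_⟩
    have hgK : g ∈ K := by
      by_contra hng
      exact hg (dif_neg hng)
    exact ⟨1, Finset.mem_singleton_self 1, g, hgK, 1, one_mem K, by simp⟩

lemma unit_conv {Φ : G → Module.End C V} (hΦ : Φ ∈ Hecke K ρ) :
    conv K (heckeUnit K ρ) Φ = Φ := by
  funext g
  have h0 : ∀ q : G ⧸ K, q ≠ (QuotientGroup.mk 1 : G ⧸ K) →
      heckeUnit K ρ (Quotient.out q) * Φ ((Quotient.out q)⁻¹ * g) = 0 := by
    intro q hq
    have : Quotient.out q ∉ K := fun h => hq ((out_mem_iff_one q).mp h)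
    show (if h : Quotient.out q ∈ K then (ρ ⟨_, h⟩ : Module.End C V) else 0) * _ = 0
    rw [dif_neg this, zero_mul]
  have e := finsum_eq_single
    (fun q : G ⧸ K => heckeUnit K ρ (Quotient.out q) * Φ ((Quotient.out q)⁻¹ * g)) (QuotientGroup.mk 1) h0
  show ∑ᶠ q : G ⧸ K, heckeUnit K ρ (Quotient.out q) * Φ ((Quotient.out q)⁻¹ * g) = Φ g
  rw [e]
  have hK : Quotient.out (QuotientGroup.mk 1 : G ⧸ K) ∈ K := (out_mem_iff_one (QuotientGroup.mk 1)).mpr rfl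
  show (if h : Quotient.out (QuotientGroup.mk 1 : G ⧸ K) ∈ K then (ρ ⟨_, h⟩ : Module.End C V) else 0) * _ = Φ g
  rw [dif_pos hK, ← hecke1 hΦ ⟨Quotient.out (QuotientGroup.mk 1 : G ⧸ K), hK⟩]
  congr 1
  simp

lemma conv_unit {Φ : G → Module.End C V} (hΦ : Φ ∈ Hecke K ρ) :
    conv K Φ (heckeUnit K ρ) = Φ := by
  funext g
  have h0 : ∀ q : G ⧸ K, q ≠ QuotientGroup.mk g →
      Φ (Quotient.out q) * heckeUnit K ρ ((Quotient.out q)⁻¹ * g) = 0 := by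
    intro q hq
    have hn : (Quotient.out q)⁻¹ * g ∉ K := by
      intro h
      apply hq
      have : ((Quotient.out q : G) : G ⧸ K) = ((g : G) : G ⧸ K) := QuotientGroup.eq.mpr h
      rw [← this, QuotientGroup.out_eq']
    show _ * (if h : (Quotient.out q)⁻¹ * g ∈ K then (ρ ⟨_, h⟩ : Module.End C V) else 0) = 0
    rw [dif_neg hn, mul_zero]
  have e := finsum_eq_single
    (fun q : G ⧸ K => Φ (Quotient.out q) * heckeUnit K ρ ((Quotient.out q)⁻¹ * g))
    (QuotientGroup.mk g) h0
  show ∑ᶠ q : G ⧸ K, Φ (Quotient.out q) * heckeUnit K ρ ((Quotient.out q)⁻¹ * g) = Φ g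
  rw [e]
  have hK := out_mk_k (K := K) g
  show _ * (if h : (Quotient.out (QuotientGroup.mk g : G ⧸ K))⁻¹ * g ∈ K
      then (ρ ⟨_, h⟩ : Module.End C V) else 0) = Φ g
  rw [dif_pos hK, ← hecke2 hΦ _ ⟨_, hK⟩]
  congr 1
  simp

lemma unit_act {f : G → V} (hf : f ∈ cInd K ρ) :
    convAct K (heckeUnit K ρ) f = f := by
  funext g
  have h0 : ∀ q : G ⧸ K, q ≠ (QuotientGroup.mk 1 : G ⧸ K) →
      heckeUnit K ρ (Quotient.out q) (f ((Quotient.out q)⁻¹ * g)) = 0 := by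
    intro q hq
    have : Quotient.out q ∉ K := fun h => hq ((out_mem_iff_one q).mp h)
    show (if h : Quotient.out q ∈ K then (ρ ⟨_, h⟩ : Module.End C V) else 0) _ = 0
    rw [dif_neg this]
    rfl
  have e := finsum_eq_single
    (fun q : G ⧸ K => heckeUnit K ρ (Quotient.out q) (f ((Quotient.out q)⁻¹ * g))) (QuotientGroup.mk 1) h0
  show ∑ᶠ q : G ⧸ K, heckeUnit K ρ (Quotient.out q) (f ((Quotient.out q)⁻¹ * g)) = f g
  rw [e]
  have hK : Quotient.out (QuotientGroup.mk 1 : G ⧸ K) ∈ K := (out_mem_iff_one (QuotientGroup.mk 1)).mpr rfl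
  show (if h : Quotient.out (QuotientGroup.mk 1 : G ⧸ K) ∈ K then (ρ ⟨_, h⟩ : Module.End C V) else 0) _ = f g
  rw [dif_pos hK, ← hf.1 ⟨Quotient.out (QuotientGroup.mk 1 : G ⧸ K), hK⟩]
  congr 1
  simp

/-- The element of `ind_K^G V` supported on `K` with value `ρ k v` at `k`. -/
def fV (ρ : Representation C ↥K V) (v : V) : G → V :=
  fun x => if h : x ∈ K then ρ ⟨x, h⟩ v else 0

lemma fV_mem (v : V) : fV ρ v ∈ cInd K ρ := by
  constructor
  · intro k x
    by_cases hx : x ∈ K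
    · have h1 : (↑k * x : G) ∈ K := mul_mem k.2 hx
      show (if h : (↑k * x : G) ∈ K then ρ ⟨↑k * x, h⟩ v else 0) = _
      rw [dif_pos h1]
      show _ = ρ k (if h : x ∈ K then ρ ⟨x, h⟩ v else 0)
      rw [dif_pos hx]
      have : (⟨↑k * x, h1⟩ : ↥K) = k * ⟨x, hx⟩ := by ext; rfl
      rw [this, map_mul]
      rfl
    · have h1 : (↑k * x : G) ∉ K := fun hm => hx (by
        have := mul_mem (inv_mem k.2) hm
        rwa [inv_mul_cancel_left] at this)
      show (if h : (↑k * x : G) ∈ K then ρ ⟨↑k * x, h⟩ v else 0)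
        = ρ k (if h : x ∈ K then ρ ⟨x, h⟩ v else 0)
      rw [dif_neg h1, dif_neg hx, map_zero]
  · refine ⟨{1}, fun x hx => ?_⟩
    have hxK : x ∈ K := by
      by_contra hnx
      exact hx (dif_neg hnx)
    exact ⟨1, Finset.mem_singleton_self 1, x, hxK, by simp⟩


lemma act_fV {Φ : G → Module.End C V} (hΦ : Φ ∈ Hecke K ρ) (v : V) (g : G) :
    convAct K Φ (fV ρ v) g = Φ g v := by
  have h0 : ∀ q : G ⧸ K, q ≠ QuotientGroup.mk g →
      Φ (Quotient.out q) (fV ρ v ((Quotient.out q)⁻¹ * g)) = 0 := by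
    intro q hq
    have hn : (Quotient.out q)⁻¹ * g ∉ K := by
      intro h
      apply hq
      have : ((Quotient.out q : G) : G ⧸ K) = ((g : G) : G ⧸ K) := QuotientGroup.eq.mpr h
      rw [← this, QuotientGroup.out_eq']
    show Φ _ (if h : (Quotient.out q)⁻¹ * g ∈ K then ρ ⟨_, h⟩ v else 0) = 0
    rw [dif_neg hn, map_zero]
  have e := finsum_eq_single
    (fun q : G ⧸ K => Φ (Quotient.out q) (fV ρ v ((Quotient.out q)⁻¹ * g)))
    (QuotientGroup.mk g) h0
  show ∑ᶠ q : G ⧸ K, Φ (Quotient.out q) (fV ρ v ((Quotient.out q)⁻¹ * g)) = Φ g v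
  rw [e]
  have hK := out_mk_k (K := K) g
  show Φ _ (if h : (Quotient.out (QuotientGroup.mk g : G ⧸ K))⁻¹ * g ∈ K
      then ρ ⟨_, h⟩ v else 0) = Φ g v
  rw [dif_pos hK, ← Module.End.mul_apply, ← hecke2 hΦ _ ⟨_, hK⟩]
  have : (Quotient.out (QuotientGroup.mk g : G ⧸ K)) *
      ((Quotient.out (QuotientGroup.mk g : G ⧸ K))⁻¹ * g) = g := by simp
  rw [this]

lemma act_inj {Φ Ψ : G → Module.End C V} (hΦ : Φ ∈ Hecke K ρ) (hΨ : Ψ ∈ Hecke K ρ)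
    (h : ∀ f ∈ cInd K ρ, convAct K Φ f = convAct K Ψ f) : Φ = Ψ := by
  funext g
  apply LinearMap.ext
  intro v
  have h2 := congrFun (h (fV ρ v) (fV_mem v)) g
  rw [act_fV hΦ v g, act_fV hΨ v g] at h2
  exact h2

include hA1 in
lemma conv_add_right {Φ : G → Module.End C V} (hΦ : Φ ∈ Hecke K ρ)
    (Ψ Ξ : G → Module.End C V) : conv K Φ (Ψ + Ξ) = conv K Φ Ψ + conv K Φ Ξ := by
  funext g
  have e : ∀ q : G ⧸ K, Φ (Quotient.out q) * (Ψ + Ξ) ((Quotient.out q)⁻¹ * g)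
      = Φ (Quotient.out q) * Ψ ((Quotient.out q)⁻¹ * g)
        + Φ (Quotient.out q) * Ξ ((Quotient.out q)⁻¹ * g) := fun q => by
    simp [mul_add]
  show ∑ᶠ q : G ⧸ K, Φ (Quotient.out q) * (Ψ + Ξ) ((Quotient.out q)⁻¹ * g)
      = conv K Φ Ψ g + conv K Φ Ξ g
  rw [finsum_congr e, finsum_add_distrib (conv_fin hA1 hΦ Ψ g) (conv_fin hA1 hΦ Ξ g)]
  rfl

include hA1 in
lemma conv_add_left {Ψ Ξ : G → Module.End C V} (hΨ : Ψ ∈ Hecke K ρ) (hΞ : Ξ ∈ Hecke K ρ)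
    (Φ : G → Module.End C V) : conv K (Ψ + Ξ) Φ = conv K Ψ Φ + conv K Ξ Φ := by
  funext g
  have e : ∀ q : G ⧸ K, (Ψ + Ξ) (Quotient.out q) * Φ ((Quotient.out q)⁻¹ * g)
      = Ψ (Quotient.out q) * Φ ((Quotient.out q)⁻¹ * g)
        + Ξ (Quotient.out q) * Φ ((Quotient.out q)⁻¹ * g) := fun q => by
    simp [add_mul]
  show ∑ᶠ q : G ⧸ K, (Ψ + Ξ) (Quotient.out q) * Φ ((Quotient.out q)⁻¹ * g)
      = conv K Ψ Φ g + conv K Ξ Φ g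
  rw [finsum_congr e, finsum_add_distrib (conv_fin hA1 hΨ Φ g) (conv_fin hA1 hΞ Φ g)]
  rfl

include hA1 in
lemma conv_smul_left {Φ : G → Module.End C V} (hΦ : Φ ∈ Hecke K ρ)
    (Ψ : G → Module.End C V) (c : C) : conv K (c • Φ) Ψ = c • conv K Φ Ψ := by
  funext g
  have e : ∀ q : G ⧸ K, (c • Φ) (Quotient.out q) * Ψ ((Quotient.out q)⁻¹ * g)
      = c • (Φ (Quotient.out q) * Ψ ((Quotient.out q)⁻¹ * g)) := fun q => by
    simp [smul_mul_assoc]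
  show ∑ᶠ q : G ⧸ K, (c • Φ) (Quotient.out q) * Ψ ((Quotient.out q)⁻¹ * g)
      = c • conv K Φ Ψ g
  rw [finsum_congr e, ← smul_finsum' c (conv_fin hA1 hΦ Ψ g)]
  rfl

include hA1 in
lemma conv_smul_right {Φ : G → Module.End C V} (hΦ : Φ ∈ Hecke K ρ)
    (Ψ : G → Module.End C V) (c : C) : conv K Φ (c • Ψ) = c • conv K Φ Ψ := by
  funext g
  have e : ∀ q : G ⧸ K, Φ (Quotient.out q) * (c • Ψ) ((Quotient.out q)⁻¹ * g)
      = c • (Φ (Quotient.out q) * Ψ ((Quotient.out q)⁻¹ * g)) := fun q => by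
    simp [mul_smul_comm]
  show ∑ᶠ q : G ⧸ K, Φ (Quotient.out q) * (c • Ψ) ((Quotient.out q)⁻¹ * g)
      = c • conv K Φ Ψ g
  rw [finsum_congr e, ← smul_finsum' c (conv_fin hA1 hΦ Ψ g)]
  rfl

include hA1 in
lemma act_add_left {Φ Ψ : G → Module.End C V} (hΦ : Φ ∈ Hecke K ρ) (hΨ : Ψ ∈ Hecke K ρ)
    (f : G → V) : convAct K (Φ + Ψ) f = convAct K Φ f + convAct K Ψ f := by
  funext g
  have e : ∀ q : G ⧸ K, (Φ + Ψ) (Quotient.out q) (f ((Quotient.out q)⁻¹ * g))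
      = Φ (Quotient.out q) (f ((Quotient.out q)⁻¹ * g))
        + Ψ (Quotient.out q) (f ((Quotient.out q)⁻¹ * g)) := fun q => by
    simp
  show ∑ᶠ q : G ⧸ K, (Φ + Ψ) (Quotient.out q) (f ((Quotient.out q)⁻¹ * g))
      = convAct K Φ f g + convAct K Ψ f g
  rw [finsum_congr e, finsum_add_distrib (act_fin hA1 hΦ f g) (act_fin hA1 hΨ f g)]
  rfl

include hA1 in
lemma act_smul_left {Φ : G → Module.End C V} (hΦ : Φ ∈ Hecke K ρ) (f : G → V) (c : C) :
    convAct K (c • Φ) f = c • convAct K Φ f := by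
  funext g
  have e : ∀ q : G ⧸ K, (c • Φ) (Quotient.out q) (f ((Quotient.out q)⁻¹ * g))
      = c • (Φ (Quotient.out q) (f ((Quotient.out q)⁻¹ * g))) := fun q => by simp
  show ∑ᶠ q : G ⧸ K, (c • Φ) (Quotient.out q) (f ((Quotient.out q)⁻¹ * g))
      = c • convAct K Φ f g
  rw [finsum_congr e, ← smul_finsum' c (act_fin hA1 hΦ f g)]
  rfl

include hA1 in
lemma act_add_right {Φ : G → Module.End C V} (hΦ : Φ ∈ Hecke K ρ) (f f' : G → V) :
    convAct K Φ (f + f') = convAct K Φ f + convAct K Φ f' := by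
  funext g
  have e : ∀ q : G ⧸ K, Φ (Quotient.out q) ((f + f') ((Quotient.out q)⁻¹ * g))
      = Φ (Quotient.out q) (f ((Quotient.out q)⁻¹ * g))
        + Φ (Quotient.out q) (f' ((Quotient.out q)⁻¹ * g)) := fun q => by
    simp
  show ∑ᶠ q : G ⧸ K, Φ (Quotient.out q) ((f + f') ((Quotient.out q)⁻¹ * g))
      = convAct K Φ f g + convAct K Φ f' g
  rw [finsum_congr e, finsum_add_distrib (act_fin hA1 hΦ f g) (act_fin hA1 hΦ f' g)]
  rfl

include hA1 in
lemma act_smul_right {Φ : G → Module.End C V} (hΦ : Φ ∈ Hecke K ρ) (f : G → V) (c : C) :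
    convAct K Φ (c • f) = c • convAct K Φ f := by
  funext g
  have e : ∀ q : G ⧸ K, Φ (Quotient.out q) ((c • f) ((Quotient.out q)⁻¹ * g))
      = c • (Φ (Quotient.out q) (f ((Quotient.out q)⁻¹ * g))) := fun q => by simp
  show ∑ᶠ q : G ⧸ K, Φ (Quotient.out q) ((c • f) ((Quotient.out q)⁻¹ * g))
      = c • convAct K Φ f g
  rw [finsum_congr e, ← smul_finsum' c (act_fin hA1 hΦ f g)]
  rfl

lemma act_translate (Φ : G → Module.End C V) (f : G → V) (g : G) :
    convAct K Φ (fun x => f (x * g)) = fun x => convAct K Φ f (x * g) := by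
  funext x
  refine finsum_congr fun q => ?_
  show Φ (Quotient.out q) (f (((Quotient.out q)⁻¹ * x) * g)) = _
  rw [mul_assoc]

include hA1 in
lemma act_assoc {Φ Ψ : G → Module.End C V} {f : G → V} (hΦ : Φ ∈ Hecke K ρ)
    (hΨ : Ψ ∈ Hecke K ρ) (hf : f ∈ cInd K ρ) :
    convAct K (conv K Φ Ψ) f = convAct K Φ (convAct K Ψ f) := by
  funext g
  obtain ⟨SΦL, hSΦL⟩ := heckeSuppLeft hA1 hΦ
  obtain ⟨SΨL, hSΨL⟩ := heckeSuppLeft hA1 hΨ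
  set T : G ⧸ K → G ⧸ K → V := fun q r => Φ (Quotient.out r)
    (Ψ ((Quotient.out r)⁻¹ * Quotient.out q) (f ((Quotient.out q)⁻¹ * g))) with hTdef
  have lhs : convAct K (conv K Φ Ψ) f g = ∑ᶠ q : G ⧸ K, ∑ᶠ r : G ⧸ K, T q r := by
    refine finsum_congr fun q => ?_
    exact AddMonoidHom.map_finsum
      (AddMonoidHom.mk' (fun (L : Module.End C V) => L (f ((Quotient.out q)⁻¹ * g)))
        (fun a b => rfl))
      (conv_fin hA1 hΦ Ψ (Quotient.out q))
  have rhs : convAct K Φ (convAct K Ψ f) g = ∑ᶠ r : G ⧸ K, ∑ᶠ q : G ⧸ K, T q r := by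
    refine finsum_congr fun r => ?_
    set h := Quotient.out r with hhdef
    have hre : convAct K Ψ f (h⁻¹ * g)
        = ∑ᶠ q : G ⧸ K, Ψ (h⁻¹ * Quotient.out q)
            (f ((h⁻¹ * Quotient.out q)⁻¹ * (h⁻¹ * g))) :=
      (finsum_translate (fun y => Ψ y (f (y⁻¹ * (h⁻¹ * g))))
        (act_term_K hΨ hf (h⁻¹ * g)) h⁻¹).symm
    have harg : ∀ q : G ⧸ K, (h⁻¹ * Quotient.out q)⁻¹ * (h⁻¹ * g)
        = (Quotient.out q)⁻¹ * g := fun q => by simp [mul_inv_rev, mul_assoc]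
    have hfin2 : (Function.support fun q : G ⧸ K =>
        Ψ (h⁻¹ * Quotient.out q) (f ((Quotient.out q)⁻¹ * g))).Finite := by
      refine supp_fin (fun y => Ψ (h⁻¹ * y) (f (y⁻¹ * g))) (SΨL.image (fun s => h * s))
        fun y hy => ?_
      have hne : Ψ (h⁻¹ * y) ≠ 0 := fun h0 => hy (by rw [h0]; rfl)
      obtain ⟨s, hs, k, hk, he⟩ := hSΨL _ hne
      refine ⟨h * s, Finset.mem_image_of_mem _ hs, k, hk, ?_⟩
      have : y = h * (h⁻¹ * y) := by simp
      rw [this, he, mul_assoc]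
    have hmap : Φ h (∑ᶠ q : G ⧸ K, Ψ (h⁻¹ * Quotient.out q) (f ((Quotient.out q)⁻¹ * g)))
        = ∑ᶠ q : G ⧸ K, Φ h (Ψ (h⁻¹ * Quotient.out q) (f ((Quotient.out q)⁻¹ * g))) :=
      AddMonoidHom.map_finsum (Φ h).toAddMonoidHom hfin2
    calc Φ h (convAct K Ψ f (h⁻¹ * g))
        = Φ h (∑ᶠ q : G ⧸ K, Ψ (h⁻¹ * Quotient.out q) (f ((Quotient.out q)⁻¹ * g))) := by
          rw [hre]
          congr 1
          exact finsum_congr fun q => by rw [harg q]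
      _ = ∑ᶠ q : G ⧸ K, T q r := hmap
  rw [lhs, rhs]
  refine finsum_swap T
    (((SΦL.image (QuotientGroup.mk : G → G ⧸ K)) ×ˢ SΨL).image
      (fun p => QuotientGroup.mk (Quotient.out p.1 * p.2)))
    (SΦL.image (QuotientGroup.mk : G → G ⧸ K)) ?_
  intro q r hT
  have hΦne : Φ (Quotient.out r) ≠ 0 := fun h0 => hT (by simp only [hTdef]; rw [h0]; rfl)
  have hΨne : Ψ ((Quotient.out r)⁻¹ * Quotient.out q) ≠ 0 := fun h0 => hT (by
    simp only [hTdef]; rw [h0]; simp)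
  obtain ⟨s, hs, k, hk, he⟩ := hSΦL _ hΦne
  obtain ⟨t, ht, k', hk', he'⟩ := hSΨL _ hΨne
  have hrB : r ∈ SΦL.image (QuotientGroup.mk : G → G ⧸ K) := by
    have hmk : ((s : G) : G ⧸ K) = ((Quotient.out r : G) : G ⧸ K) :=
      QuotientGroup.eq.mpr (by rw [he]; simpa using hk)
    refine Finset.mem_image.mpr ⟨s, hs, ?_⟩
    rw [hmk, QuotientGroup.out_eq']
  refine ⟨?_, hrB⟩
  have hq : ((Quotient.out r * t : G) : G ⧸ K) = ((Quotient.out q : G) : G ⧸ K) := by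
    refine QuotientGroup.eq.mpr ?_
    have hoq : Quotient.out q = Quotient.out r * (t * k') := by rw [← he']; simp
    rw [hoq]
    have : (Quotient.out r * t)⁻¹ * (Quotient.out r * (t * k')) = k' := by group
    rw [this]
    exact hk'
  refine Finset.mem_image.mpr ⟨(r, t), Finset.mem_product.mpr ⟨hrB, ht⟩, ?_⟩
  show QuotientGroup.mk (Quotient.out r * t) = q
  rw [hq, QuotientGroup.out_eq']


include hA1 in
lemma conv_assoc {Φ Ψ Ξ : G → Module.End C V} (hΦ : Φ ∈ Hecke K ρ) (hΨ : Ψ ∈ Hecke K ρ)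
    (hΞ : Ξ ∈ Hecke K ρ) : conv K (conv K Φ Ψ) Ξ = conv K Φ (conv K Ψ Ξ) := by
  apply act_inj (convMem hA1 (convMem hA1 hΦ hΨ) hΞ) (convMem hA1 hΦ (convMem hA1 hΨ hΞ))
  intro f hf
  rw [act_assoc hA1 (convMem hA1 hΦ hΨ) hΞ hf, act_assoc hA1 hΦ hΨ (actMem hA1 hΞ hf),
    act_assoc hA1 hΦ (convMem hA1 hΨ hΞ) hf, act_assoc hA1 hΨ hΞ hf]

lemma cInd_translate {f : G → V} (hf : f ∈ cInd K ρ) (g : G) :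
    (fun x => f (x * g)) ∈ cInd K ρ := by
  obtain ⟨hf1, S, hf2⟩ := hf
  refine ⟨fun k x => by simp only []; rw [mul_assoc, hf1], S.image (fun s => s * g⁻¹),
    fun x hx => ?_⟩
  obtain ⟨s, hs, k, hk, he⟩ := hf2 (x * g) hx
  refine ⟨s * g⁻¹, Finset.mem_image_of_mem _ hs, k, hk, ?_⟩
  rw [← mul_assoc, ← he]
  simp

lemma fV_translate (v : V) (k' : ↥K) :
    (fun x => fV ρ v (x * ↑k')) = fV ρ (ρ k' v) := by
  funext x
  by_cases hx : x ∈ K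
  · have h1 : (x * ↑k' : G) ∈ K := mul_mem hx k'.2
    show (if h : (x * ↑k' : G) ∈ K then ρ ⟨x * ↑k', h⟩ v else 0)
      = (if h : x ∈ K then ρ ⟨x, h⟩ (ρ k' v) else 0)
    rw [dif_pos h1, dif_pos hx]
    have : (⟨x * ↑k', h1⟩ : ↥K) = ⟨x, hx⟩ * k' := by ext; rfl
    rw [this, map_mul]
    rfl
  · have h1 : (x * ↑k' : G) ∉ K := fun hm => hx (by
      have := mul_mem hm (inv_mem k'.2)
      rwa [mul_inv_cancel_right] at this)
    show (if h : (x * ↑k' : G) ∈ K then ρ ⟨x * ↑k', h⟩ v else 0)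
      = (if h : x ∈ K then ρ ⟨x, h⟩ (ρ k' v) else 0)
    rw [dif_neg h1, dif_neg hx]


include hA1 in
lemma act_finset_sum {Φ : G → Module.End C V} (hΦ : Φ ∈ Hecke K ρ) {ι : Type}
    (T : Finset ι) (gf : ι → G → V) :
    convAct K Φ (∑ i ∈ T, gf i) = ∑ i ∈ T, convAct K Φ (gf i) := by
  classical
  induction T using Finset.induction_on with
  | empty =>
    simp only [Finset.sum_empty]
    funext g
    exact finsum_eq_zero_of_forall_eq_zero fun q => by simp
  | insert _ _ ha ih =>
    rw [Finset.sum_insert ha, Finset.sum_insert ha, act_add_right hA1 hΦ, ih]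

lemma fV_add (v w : V) : fV ρ (v + w) = fV ρ v + fV ρ w := by
  funext x
  by_cases hx : x ∈ K
  · show (if h : x ∈ K then ρ ⟨x, h⟩ (v + w) else 0)
      = (if h : x ∈ K then ρ ⟨x, h⟩ v else 0) + (if h : x ∈ K then ρ ⟨x, h⟩ w else 0)
    rw [dif_pos hx, dif_pos hx, dif_pos hx, map_add]
  · show (if h : x ∈ K then ρ ⟨x, h⟩ (v + w) else 0)
      = (if h : x ∈ K then ρ ⟨x, h⟩ v else 0) + (if h : x ∈ K then ρ ⟨x, h⟩ w else 0)
    rw [dif_neg hx, dif_neg hx, dif_neg hx, add_zero]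

lemma fV_smul (c : C) (v : V) : fV ρ (c • v) = c • fV ρ v := by
  funext x
  by_cases hx : x ∈ K
  · show (if h : x ∈ K then ρ ⟨x, h⟩ (c • v) else 0)
      = c • (if h : x ∈ K then ρ ⟨x, h⟩ v else 0)
    rw [dif_pos hx, dif_pos hx, map_smul]
  · show (if h : x ∈ K then ρ ⟨x, h⟩ (c • v) else 0)
      = c • (if h : x ∈ K then ρ ⟨x, h⟩ v else 0)
    rw [dif_neg hx, dif_neg hx, smul_zero]

include hA1 in
lemma surj [FiniteDimensional C V] (bEnd : ↥(cInd K ρ) →ₗ[C] ↥(cInd K ρ))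
    (hG : ∀ (g : G) (f f' : ↥(cInd K ρ)),
      ((f' : G → V) = fun x => (f : G → V) (x * g)) →
      ((bEnd f' : G → V) = fun x => (bEnd f : G → V) (x * g))) :
    ∃ Φ ∈ Hecke K ρ, ∀ f : ↥(cInd K ρ), (bEnd f : G → V) = convAct K Φ ↑f := by
  set fVL : V → ↥(cInd K ρ) := fun v => ⟨fV ρ v, fV_mem v⟩ with hfVL
  set Φ₀ : G → Module.End C V := fun g =>
    { toFun := fun v => ((bEnd (fVL v) : ↥(cInd K ρ)) : G → V) g
      map_add' := fun v w => by
        show ((bEnd (fVL (v + w)) : ↥(cInd K ρ)) : G → V) g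
          = ((bEnd (fVL v) : ↥(cInd K ρ)) : G → V) g
            + ((bEnd (fVL w) : ↥(cInd K ρ)) : G → V) g
        have h1 : fVL (v + w) = fVL v + fVL w := Subtype.ext (fV_add v w)
        rw [h1, map_add]
        rfl
      map_smul' := fun c v => by
        show ((bEnd (fVL (c • v)) : ↥(cInd K ρ)) : G → V) g
          = c • ((bEnd (fVL v) : ↥(cInd K ρ)) : G → V) g
        have h1 : fVL (c • v) = c • fVL v := Subtype.ext (fV_smul c v)
        rw [h1, map_smul]
        rfl } with hΦ₀def
  have hB : ∀ (v : V) (k' : ↥K) (g : G),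
      ((bEnd (fVL v) : ↥(cInd K ρ)) : G → V) (g * ↑k') = Φ₀ g (ρ k' v) := by
    intro v k' g
    have htr := hG (↑k' : G) (fVL v) (fVL (ρ k' v)) (fV_translate v k').symm
    exact (congrFun htr g).symm
  have hΦ₀ : Φ₀ ∈ Hecke K ρ := by
    constructor
    · intro k k' g
      apply LinearMap.ext
      intro v
      calc Φ₀ (↑k * g * ↑k') v
          = ((bEnd (fVL v) : ↥(cInd K ρ)) : G → V) (↑k * (g * ↑k')) := by
            rw [mul_assoc]; rfl
        _ = ρ k (((bEnd (fVL v) : ↥(cInd K ρ)) : G → V) (g * ↑k')) :=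
            (bEnd (fVL v)).2.1 k (g * ↑k')
        _ = ρ k (Φ₀ g (ρ k' v)) := by rw [hB]
        _ = (ρ k * Φ₀ g * ρ k') v := by simp [Module.End.mul_apply]
    · set b := Module.finBasis C V with hb
      have hsupp := fun i => (bEnd (fVL (b i))).2.2
      choose T hT using hsupp
      refine ⟨Finset.univ.biUnion T, fun g hg => ?_⟩
      have hex : ∃ i, Φ₀ g (b i) ≠ 0 := by
        by_contra hno
        push_neg at hno
        refine hg (Module.Basis.ext b fun i => ?_)
        rw [hno i]
        rfl
      obtain ⟨i, hi⟩ := hex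
      obtain ⟨s, hs, k, hk, he⟩ := hT i g hi
      exact ⟨s, Finset.mem_biUnion.mpr ⟨i, Finset.mem_univ i, hs⟩, k, hk, 1, one_mem K,
        by rw [he]; simp⟩
  refine ⟨Φ₀, hΦ₀, fun f => ?_⟩
  set f₀ : G → V := (f : G → V) with hf₀
  set gS : G → G → V := fun s => fun x => fV ρ (f₀ s) (x * s⁻¹) with hgS
  have gS_mem : ∀ s : G, gS s ∈ cInd K ρ := fun s => cInd_translate (fV_mem (f₀ s)) s⁻¹
  have act_gS : ∀ s : G, convAct K Φ₀ (gS s) = fun x => Φ₀ (x * s⁻¹) (f₀ s) := by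
    intro s
    funext x
    have h0 : ∀ q : G ⧸ K, q ≠ QuotientGroup.mk (x * s⁻¹) →
        Φ₀ (Quotient.out q) (gS s ((Quotient.out q)⁻¹ * x)) = 0 := by
      intro q hq
      have hn : ((Quotient.out q)⁻¹ * x) * s⁻¹ ∉ K := by
        intro hmem
        apply hq
        have e : (Quotient.out q)⁻¹ * (x * s⁻¹) ∈ K := by rw [← mul_assoc]; exact hmem
        have h2 : ((Quotient.out q : G) : G ⧸ K) = ((x * s⁻¹ : G) : G ⧸ K) :=
          QuotientGroup.eq.mpr e
        rw [← h2, QuotientGroup.out_eq']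
      show Φ₀ _ (if h : ((Quotient.out q)⁻¹ * x) * s⁻¹ ∈ K
          then ρ ⟨_, h⟩ (f₀ s) else 0) = 0
      rw [dif_neg hn, map_zero]
    have e := finsum_eq_single
      (fun q : G ⧸ K => Φ₀ (Quotient.out q) (gS s ((Quotient.out q)⁻¹ * x)))
      (QuotientGroup.mk (x * s⁻¹)) h0
    show ∑ᶠ q : G ⧸ K, Φ₀ (Quotient.out q) (gS s ((Quotient.out q)⁻¹ * x))
        = Φ₀ (x * s⁻¹) (f₀ s)
    rw [e]
    have hK : (Quotient.out (QuotientGroup.mk (x * s⁻¹) : G ⧸ K))⁻¹ * (x * s⁻¹) ∈ K :=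
      out_mk_k _
    have hK' : ((Quotient.out (QuotientGroup.mk (x * s⁻¹) : G ⧸ K))⁻¹ * x) * s⁻¹ ∈ K := by
      rw [mul_assoc]; exact hK
    show Φ₀ _ (if h : ((Quotient.out (QuotientGroup.mk (x * s⁻¹) : G ⧸ K))⁻¹ * x) * s⁻¹ ∈ K
        then ρ ⟨_, h⟩ (f₀ s) else 0) = Φ₀ (x * s⁻¹) (f₀ s)
    rw [dif_pos hK', ← Module.End.mul_apply, ← hecke2 hΦ₀ _ ⟨_, hK'⟩]
    have harg : (Quotient.out (QuotientGroup.mk (x * s⁻¹) : G ⧸ K)) *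
        (((Quotient.out (QuotientGroup.mk (x * s⁻¹) : G ⧸ K))⁻¹ * x) * s⁻¹) = x * s⁻¹ := by
      group
    rw [harg]
  have bEnd_gS : ∀ s : G, ((bEnd ⟨gS s, gS_mem s⟩ : ↥(cInd K ρ)) : G → V)
      = fun x => Φ₀ (x * s⁻¹) (f₀ s) := by
    intro s
    have htr := hG s⁻¹ (fVL (f₀ s)) ⟨gS s, gS_mem s⟩ rfl
    rw [htr]
    rfl
  obtain ⟨hf1, S₀, hf2⟩ := f.2
  set T : Finset (G ⧸ K) := S₀.image (fun s => (QuotientGroup.mk s⁻¹ : G ⧸ K)) with hTdef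
  set rr : G ⧸ K → G := fun q => (Quotient.out q)⁻¹ with hrr
  have hdecomp : f₀ = ∑ q ∈ T, gS (rr q) := by
    funext x
    rw [Finset.sum_apply]
    by_cases hxT : (QuotientGroup.mk x⁻¹ : G ⧸ K) ∈ T
    · have hzero : ∀ q ∈ T, q ≠ QuotientGroup.mk x⁻¹ → gS (rr q) x = 0 := by
        intro q hqT hqne
        have hn : x * ((Quotient.out q)⁻¹)⁻¹ ∉ K := by
          intro hmem
          apply hqne
          rw [inv_inv] at hmem
          have h2 : ((x⁻¹ : G) : G ⧸ K) = ((Quotient.out q : G) : G ⧸ K) :=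
            QuotientGroup.eq.mpr (by simpa using hmem)
          rw [← QuotientGroup.out_eq' q, ← h2]
        show (if h : x * ((Quotient.out q)⁻¹)⁻¹ ∈ K
            then ρ ⟨_, h⟩ (f₀ ((Quotient.out q)⁻¹)) else 0) = 0
        rw [dif_neg hn]
      rw [Finset.sum_eq_single_of_mem _ hxT hzero]
      set q₀ : G ⧸ K := QuotientGroup.mk x⁻¹ with hq₀
      have hk₀ : x * ((Quotient.out q₀)⁻¹)⁻¹ ∈ K := by
        rw [inv_inv]
        have := out_mk_k (K := K) (x⁻¹)
        have h2 := inv_mem this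
        simpa using h2
      show f₀ x = (if h : x * ((Quotient.out q₀)⁻¹)⁻¹ ∈ K
          then ρ ⟨_, h⟩ (f₀ ((Quotient.out q₀)⁻¹)) else 0)
      rw [dif_pos hk₀]
      have he : f₀ ((x * ((Quotient.out q₀)⁻¹)⁻¹) * (Quotient.out q₀)⁻¹)
          = ρ ⟨_, hk₀⟩ (f₀ ((Quotient.out q₀)⁻¹)) := hf1 ⟨_, hk₀⟩ ((Quotient.out q₀)⁻¹)
      rw [← he]
      congr 1
      group
    · have hzero : ∀ q ∈ T, gS (rr q) x = 0 := by
        intro q hqT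
        have hqne : q ≠ QuotientGroup.mk x⁻¹ := fun h => hxT (h ▸ hqT)
        have hn : x * ((Quotient.out q)⁻¹)⁻¹ ∉ K := by
          intro hmem
          apply hqne
          rw [inv_inv] at hmem
          have h2 : ((x⁻¹ : G) : G ⧸ K) = ((Quotient.out q : G) : G ⧸ K) :=
            QuotientGroup.eq.mpr (by simpa using hmem)
          rw [← QuotientGroup.out_eq' q, ← h2]
        show (if h : x * ((Quotient.out q)⁻¹)⁻¹ ∈ K
            then ρ ⟨_, h⟩ (f₀ ((Quotient.out q)⁻¹)) else 0) = 0
        rw [dif_neg hn]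
      rw [Finset.sum_eq_zero hzero]
      by_contra hne
      obtain ⟨s, hs, k, hk, he⟩ := hf2 x hne
      apply hxT
      refine Finset.mem_image.mpr ⟨s, hs, ?_⟩
      refine (QuotientGroup.eq.mpr ?_).symm
      rw [he]
      simpa using hk
  have hfsum : f = ∑ q ∈ T, (⟨gS (rr q), gS_mem (rr q)⟩ : ↥(cInd K ρ)) := by
    apply Subtype.ext
    show f₀ = _
    rw [hdecomp]
    push_cast
    rfl
  calc (bEnd f : G → V)
      = ((∑ q ∈ T, bEnd ⟨gS (rr q), gS_mem (rr q)⟩ : ↥(cInd K ρ)) : G → V) := by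
        rw [hfsum, map_sum]
    _ = ∑ q ∈ T, ((bEnd ⟨gS (rr q), gS_mem (rr q)⟩ : ↥(cInd K ρ)) : G → V) := by
        push_cast
        rfl
    _ = ∑ q ∈ T, convAct K Φ₀ (gS (rr q)) := by
        refine Finset.sum_congr rfl fun q _ => ?_
        rw [bEnd_gS (rr q), act_gS (rr q)]
    _ = convAct K Φ₀ f₀ := by rw [← act_finset_sum hA1 hΦ₀, ← hdecomp]

end Helpers

/-!
STATEMENT 3.  `C` a field, `G` a group, `K` a subgroup satisfying (A1): every double coset
`KgK` is a finite union of left cosets `Kg'`, and `(ρ, V)` a finite-dimensional smooth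
`C[K]`-module.  `H(G,K,V)` is the space of compactly supported `K`-bi-equivariant functions
`Φ : G → End_C V`, `ind_K^G V` the compactly induced module, and convolution is
`(Φ∗Ψ)(g) = Σ_{hK ∈ G/K} Φ(h)∘Ψ(h⁻¹g)`, `(Φ∗f)(g) = Σ_{hK ∈ G/K} Φ(h)(f(h⁻¹g))`, realized
via `finsum` over `G ⧸ K` using the canonical representatives `Quotient.out`.

The theorem asserts: the convolution sums are finite and independent of the choice of coset
representatives; `(H(G,K,V), ∗)` is an associative unital `C`-algebra; `Φ∗f` lies in
`ind_K^G V`; and `Φ ↦ (f ↦ Φ∗f)` is a `C`-algebra isomorphism of `H(G,K,V)` onto the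
algebra `End_{C[G]}(ind_K^G V)` of `G`-equivariant `C`-linear endomorphisms.
-/
theorem statement3 {V : Type} [AddCommGroup V] [Module C V] [FiniteDimensional C V]
    (K : Subgroup G)
    (hA1 : ∀ g : G, ∃ S : Finset G, ∀ x : G,
      (∃ k ∈ K, ∃ k' ∈ K, x = k * g * k') → ∃ s ∈ S, ∃ k ∈ K, x = k * s)
    (ρ : Representation C ↥K V) :
    -- the convolution sums have finite support ...
    (∀ Φ ∈ Hecke K ρ, ∀ Ψ ∈ Hecke K ρ, ∀ g : G,
      {q : G ⧸ K | Φ (Quotient.out q) * Ψ ((Quotient.out q)⁻¹ * g) ≠ 0}.Finite) ∧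
    (∀ Φ ∈ Hecke K ρ, ∀ f ∈ cInd K ρ, ∀ g : G,
      {q : G ⧸ K | Φ (Quotient.out q) (f ((Quotient.out q)⁻¹ * g)) ≠ 0}.Finite) ∧
    -- ... and do not depend on the choice of coset representatives
    (∀ Φ ∈ Hecke K ρ, ∀ Ψ ∈ Hecke K ρ, ∀ g : G, ∀ rep : G ⧸ K → G,
      (∀ q : G ⧸ K, QuotientGroup.mk (rep q) = q) →
      ∑ᶠ q : G ⧸ K, Φ (rep q) * Ψ ((rep q)⁻¹ * g) = conv K Φ Ψ g) ∧
    (∀ Φ ∈ Hecke K ρ, ∀ f ∈ cInd K ρ, ∀ g : G, ∀ rep : G ⧸ K → G,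
      (∀ q : G ⧸ K, QuotientGroup.mk (rep q) = q) →
      ∑ᶠ q : G ⧸ K, Φ (rep q) (f ((rep q)⁻¹ * g)) = convAct K Φ f g) ∧
    -- H(G,K,V) is stable under convolution
    (∀ Φ ∈ Hecke K ρ, ∀ Ψ ∈ Hecke K ρ, conv K Φ Ψ ∈ Hecke K ρ) ∧
    -- it is a unital ...
    heckeUnit K ρ ∈ Hecke K ρ ∧
    (∀ Φ ∈ Hecke K ρ, conv K (heckeUnit K ρ) Φ = Φ ∧ conv K Φ (heckeUnit K ρ) = Φ) ∧
    -- ... associative ...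
    (∀ Φ ∈ Hecke K ρ, ∀ Ψ ∈ Hecke K ρ, ∀ Ξ ∈ Hecke K ρ,
      conv K (conv K Φ Ψ) Ξ = conv K Φ (conv K Ψ Ξ)) ∧
    -- ... C-algebra: convolution is C-bilinear
    (∀ Φ ∈ Hecke K ρ, ∀ Ψ ∈ Hecke K ρ, ∀ Ξ ∈ Hecke K ρ,
      conv K Φ (Ψ + Ξ) = conv K Φ Ψ + conv K Φ Ξ ∧
      conv K (Ψ + Ξ) Φ = conv K Ψ Φ + conv K Ξ Φ) ∧
    (∀ c : C, ∀ Φ ∈ Hecke K ρ, ∀ Ψ ∈ Hecke K ρ,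
      conv K (c • Φ) Ψ = c • conv K Φ Ψ ∧ conv K Φ (c • Ψ) = c • conv K Φ Ψ) ∧
    -- Φ∗f again lies in ind_K^G V
    (∀ Φ ∈ Hecke K ρ, ∀ f ∈ cInd K ρ, convAct K Φ f ∈ cInd K ρ) ∧
    -- Φ ↦ (f ↦ Φ∗f) is multiplicative, unital, C-linear in Φ,
    (∀ Φ ∈ Hecke K ρ, ∀ Ψ ∈ Hecke K ρ, ∀ f ∈ cInd K ρ,
      convAct K (conv K Φ Ψ) f = convAct K Φ (convAct K Ψ f)) ∧
    (∀ f ∈ cInd K ρ, convAct K (heckeUnit K ρ) f = f) ∧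
    (∀ Φ ∈ Hecke K ρ, ∀ Ψ ∈ Hecke K ρ, ∀ f ∈ cInd K ρ,
      convAct K (Φ + Ψ) f = convAct K Φ f + convAct K Ψ f) ∧
    (∀ c : C, ∀ Φ ∈ Hecke K ρ, ∀ f ∈ cInd K ρ, convAct K (c • Φ) f = c • convAct K Φ f) ∧
    -- each Φ acts as a C-linear G-equivariant endomorphism of ind_K^G V
    (∀ Φ ∈ Hecke K ρ, ∀ f ∈ cInd K ρ, ∀ f' ∈ cInd K ρ,
      convAct K Φ (f + f') = convAct K Φ f + convAct K Φ f') ∧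
    (∀ Φ ∈ Hecke K ρ, ∀ c : C, ∀ f ∈ cInd K ρ, convAct K Φ (c • f) = c • convAct K Φ f) ∧
    (∀ Φ ∈ Hecke K ρ, ∀ f ∈ cInd K ρ, ∀ g : G,
      convAct K Φ (fun x => f (x * g)) = fun x => convAct K Φ f (x * g)) ∧
    -- Φ ↦ (f ↦ Φ∗f) is injective on H(G,K,V) ...
    (∀ Φ ∈ Hecke K ρ, ∀ Ψ ∈ Hecke K ρ,
      (∀ f ∈ cInd K ρ, convAct K Φ f = convAct K Ψ f) → Φ = Ψ) ∧
    -- ... and surjects onto End_{C[G]}(ind_K^G V)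
    (∀ bEnd : ↥(cInd K ρ) →ₗ[C] ↥(cInd K ρ),
      (∀ (g : G) (f f' : ↥(cInd K ρ)),
        ((f' : G → V) = fun x => (f : G → V) (x * g)) →
        ((bEnd f' : G → V) = fun x => (bEnd f : G → V) (x * g))) →
      ∃ Φ ∈ Hecke K ρ, ∀ f : ↥(cInd K ρ), (bEnd f : G → V) = convAct K Φ ↑f) := by
  refine ⟨fun Φ hΦ Ψ hΨ g => conv_fin hA1 hΦ Ψ g,
    fun Φ hΦ f hf g => act_fin hA1 hΦ f g,
    fun Φ hΦ Ψ hΨ g rep hrep =>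
      finsum_rep (fun h => Φ h * Ψ (h⁻¹ * g)) (conv_term_K hΦ hΨ g) rep hrep,
    fun Φ hΦ f hf g rep hrep =>
      finsum_rep (fun h => Φ h (f (h⁻¹ * g))) (act_term_K hΦ hf g) rep hrep,
    fun Φ hΦ Ψ hΨ => convMem hA1 hΦ hΨ,
    unitMem,
    fun Φ hΦ => ⟨unit_conv hΦ, conv_unit hΦ⟩,
    fun Φ hΦ Ψ hΨ Ξ hΞ => conv_assoc hA1 hΦ hΨ hΞ,
    fun Φ hΦ Ψ hΨ Ξ hΞ => ⟨conv_add_right hA1 hΦ Ψ Ξ, conv_add_left hA1 hΨ hΞ Φ⟩,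
    fun c Φ hΦ Ψ hΨ => ⟨conv_smul_left hA1 hΦ Ψ c, conv_smul_right hA1 hΦ Ψ c⟩,
    fun Φ hΦ f hf => actMem hA1 hΦ hf,
    fun Φ hΦ Ψ hΨ f hf => act_assoc hA1 hΦ hΨ hf,
    fun f hf => unit_act hf,
    fun Φ hΦ Ψ hΨ f hf => act_add_left hA1 hΦ hΨ f,
    fun c Φ hΦ f hf => act_smul_left hA1 hΦ f c,
    fun Φ hΦ f hf f' hf' => act_add_right hA1 hΦ f f',
    fun Φ hΦ c f hf => act_smul_right hA1 hΦ f c,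
    fun Φ hΦ f hf g => act_translate Φ f g,
    fun Φ hΦ Ψ hΨ h => act_inj hΦ hΨ h,
    fun bEnd hG => surj hA1 bEnd hG⟩

end Paper
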